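/- Δ₀ is the union of the good simplices: convexHull(A ∪ C) = ⋃_{S good} convexHull(S). -/

import Mathlib

noncomputable section

/-- The ambient space `ℝ^{2k}`, written as pairs `(x, y)` with `x, y ∈ ℝ^k`. -/
abbrev V (k : ℕ) := (Fin k ⊕ Fin k) → ℝ

/-- `A_j = (e_j, 0)`. -/
def vA (k : ℕ) (j : Fin k) : V k
  | .inl i => if i = j then 1 else 0
  | .inr _ => 0

/-- `B_j = (1/(2n)) · (2·𝟙 − e_j, 2·𝟙 − e_j)` with `n = 2k − 1`. -/
def vB (k : ℕ) (j : Fin k) : V k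
  | .inl i => (2 - if i = j then 1 else 0) / (2 * (2 * (k : ℝ) - 1))
  | .inr i => (2 - if i = j then 1 else 0) / (2 * (2 * (k : ℝ) - 1))

/-- `C_j = (0, e_j)`. -/
def vC (k : ℕ) (j : Fin k) : V k
  | .inl _ => 0
  | .inr i => if i = j then 1 else 0

def setA (k : ℕ) : Set (V k) := Set.range (vA k)
def setB (k : ℕ) : Set (V k) := Set.range (vB k)
def setC (k : ℕ) : Set (V k) := Set.range (vC k)
def setX (k : ℕ) : Set (V k) := setA k ∪ setB k ∪ setC k

/-- A subset `S ⊆ X` is good if it has exactly `2k` elements, contains no full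
triple `{A_j, B_j, C_j}`, and `S ≠ A ∪ C`. -/
def IsGood (k : ℕ) (S : Set (V k)) : Prop :=
  S ⊆ setX k ∧ S.ncard = 2 * k ∧
  (∀ j : Fin k, ¬ (({vA k j, vB k j, vC k j} : Set (V k)) ⊆ S)) ∧
  S ≠ setA k ∪ setC k

def Delta0 (k : ℕ) : Set (V k) := convexHull ℝ (setA k ∪ setC k)
def Delta1 (k : ℕ) : Set (V k) := convexHull ℝ (setA k ∪ setB k)
def Delta2 (k : ℕ) : Set (V k) := convexHull ℝ (setB k ∪ setC k)

/-- The modular block `Ω = closure(Δ₀ \ (Δ₁ ∪ Δ₂))`. -/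
def OmegaB (k : ℕ) : Set (V k) := closure (Delta0 k \ (Delta1 k ∪ Delta2 k))

variable {k : ℕ}


lemma hnpos (hk : 2 ≤ k) : (0:ℝ) < 2 * (k:ℝ) - 1 := by
  have : (2:ℝ) ≤ (k:ℝ) := by exact_mod_cast hk
  linarith

lemma hNpos (hk : 2 ≤ k) : (0:ℝ) < 2 * (2 * (k:ℝ) - 1) := by linarith [hnpos hk]

lemma vA_inj {i j : Fin k} (h : vA k i = vA k j) : i = j := by
  have := congrFun h (Sum.inl i)
  simp [vA] at this
  by_contra hne
  exact hne this

lemma vC_inj {i j : Fin k} (h : vC k i = vC k j) : i = j := by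
  have := congrFun h (Sum.inr i)
  simp [vC] at this
  by_contra hne
  exact hne this

lemma vB_inj (hk : 2 ≤ k) {i j : Fin k} (h : vB k i = vB k j) : i = j := by
  have := congrFun h (Sum.inl i)
  simp [vB] at this
  by_contra hne
  rw [if_neg hne, div_eq_div_iff (hNpos hk).ne' (hNpos hk).ne'] at this
  have h2 : (2:ℝ) - 1 = 2 := by
    have := mul_right_cancel₀ (hNpos hk).ne' this
    linarith
  norm_num at h2

lemma vA_ne_vB (hk : 2 ≤ k) (i j : Fin k) : vA k i ≠ vB k j := by
  intro h
  have := congrFun h (Sum.inr j)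
  simp [vA, vB] at this
  have h1 : ((2:ℝ) - 1) = 1 := by norm_num
  rw [h1] at this
  exact (one_div_ne_zero (hNpos hk).ne') this.symm

lemma vC_ne_vB (hk : 2 ≤ k) (i j : Fin k) : vC k i ≠ vB k j := by
  intro h
  have := congrFun h (Sum.inl j)
  simp [vC, vB] at this
  have h1 : ((2:ℝ) - 1) = 1 := by norm_num
  rw [h1] at this
  exact (one_div_ne_zero (hNpos hk).ne') this.symm

lemma vA_ne_vC (i j : Fin k) : vA k i ≠ vC k j := by
  intro h
  have := congrFun h (Sum.inl i)
  simp [vA, vC] at this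

open Finset in
lemma exists_good_cut (hk : 1 ≤ k) (s : Fin k → ℝ) (hs : ∀ m, 0 ≤ s m) :
    ∃ U : Finset (Fin k), U.Nonempty ∧
      (∀ m ∈ U, (2 * (U.card : ℝ) - 1) * s m ≤ 2 * ∑ i ∈ U, s i) ∧
      (∀ m ∉ U, 2 * ∑ i ∈ U, s i ≤ (2 * (U.card : ℝ) - 1) * s m) := by
  have : NeZero k := ⟨by omega⟩
  set F : Finset (Finset (Fin k)) := Finset.univ.filter (fun U => U.Nonempty) with hF
  have hFne : F.Nonempty := ⟨{0}, by simp [hF]⟩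
  obtain ⟨U, hUF, hmin⟩ := F.exists_min_image
    (fun U => 2 * (∑ i ∈ U, s i) / (2 * (U.card : ℝ) - 1)) hFne
  have hUne : U.Nonempty := by simpa [hF] using hUF
  have hr1 : 1 ≤ U.card := hUne.card_pos
  have hd : (0:ℝ) < 2 * (U.card : ℝ) - 1 := by
    have : (1:ℝ) ≤ (U.card : ℝ) := by exact_mod_cast hr1
    linarith
  have hσ : (0:ℝ) ≤ ∑ i ∈ U, s i := Finset.sum_nonneg fun i _ => hs i
  refine ⟨U, hUne, ?_, ?_⟩
  · intro m hm
    rcases eq_or_lt_of_le hr1 with h1 | h2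
    · obtain ⟨x, hx⟩ := Finset.card_eq_one.mp h1.symm
      subst hx
      simp only [Finset.mem_singleton] at hm
      subst hm
      simp only [Finset.card_singleton, Finset.sum_singleton]
      push_cast
      nlinarith [hs m]
    · have hU' : U.erase m ∈ F := by
        simp only [hF, Finset.mem_filter, Finset.mem_univ, true_and]
        rw [← Finset.card_pos, Finset.card_erase_of_mem hm]
        omega
      have hle := hmin _ hU'
      have hc : (U.erase m).card = U.card - 1 := Finset.card_erase_of_mem hm
      have hsum : ∑ i ∈ U.erase m, s i = (∑ i ∈ U, s i) - s m :=
        Finset.sum_erase_eq_sub hm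
      rw [hc, hsum] at hle
      have hcast : ((U.card - 1 : ℕ) : ℝ) = (U.card : ℝ) - 1 := by
        have : 1 ≤ U.card := hr1
        push_cast [this]; ring
      rw [hcast] at hle
      have hd' : (0:ℝ) < 2 * ((U.card : ℝ) - 1) - 1 := by
        have : (2:ℝ) ≤ (U.card : ℝ) := by exact_mod_cast h2
        linarith
      rw [div_le_div_iff₀ hd hd'] at hle
      nlinarith
  · intro m hm
    have hU' : insert m U ∈ F := by simp [hF, Finset.insert_nonempty]
    have hle := hmin _ hU'
    have hc : (insert m U).card = U.card + 1 := Finset.card_insert_of_notMem hm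
    have hsum : ∑ i ∈ insert m U, s i = s m + ∑ i ∈ U, s i :=
      Finset.sum_insert hm
    rw [hc, hsum] at hle
    push_cast at hle
    have hd' : (0:ℝ) < 2 * ((U.card : ℝ) + 1) - 1 := by
      have : (1:ℝ) ≤ (U.card : ℝ) := by exact_mod_cast hr1
      linarith
    rw [div_le_div_iff₀ hd hd'] at hle
    nlinarith

lemma mem_good_union (hk : 2 ≤ k) {p : V k} (hp0 : ∀ x, 0 ≤ p x) (hp1 : ∑ x, p x = 1) :
    ∃ S : Set (V k), IsGood k S ∧ p ∈ convexHull ℝ S := by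
  classical
  set a : Fin k → ℝ := fun j => p (Sum.inl j) with ha
  set c : Fin k → ℝ := fun j => p (Sum.inr j) with hc
  set s : Fin k → ℝ := fun j => min (a j) (c j) with hsdef
  have hs0 : ∀ m, 0 ≤ s m := fun m => le_min (hp0 _) (hp0 _)
  obtain ⟨U, hUne, hUin, hUout⟩ := exists_good_cut (by omega) s hs0
  set σ : ℝ := ∑ i ∈ U, s i with hσdef
  set n : ℝ := 2 * (k:ℝ) - 1 with hndef
  have hn : 0 < n := hnpos hk
  set D : ℝ := 2 * (U.card : ℝ) - 1 with hDdef
  have hr1 : 1 ≤ U.card := hUne.card_pos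
  have hrk : U.card ≤ k := by
    simpa using Finset.card_le_card (Finset.subset_univ U)
  have hD : (0:ℝ) < D := by
    have : (1:ℝ) ≤ (U.card : ℝ) := by exact_mod_cast hr1
    simp only [hDdef]; linarith
  have hσ0 : 0 ≤ σ := Finset.sum_nonneg fun i _ => hs0 i
  set T : ℝ := 2 * n * σ / D with hTdef
  have hT0 : 0 ≤ T := by positivity
  have hTD : T * D = 2 * n * σ := div_mul_cancel₀ _ hD.ne'
  have hin : ∀ m ∈ U, n * s m ≤ T := by
    intro m hm
    have h1 := hUin m hm
    have h2 : n * s m * D ≤ T * D := by rw [hTD]; nlinarith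
    exact le_of_mul_le_mul_right h2 hD
  have hout : ∀ m ∉ U, T ≤ n * s m := by
    intro m hm
    have h1 := hUout m hm
    have h2 : T * D ≤ n * s m * D := by rw [hTD]; nlinarith
    exact le_of_mul_le_mul_right h2 hD
  set u : Fin k → ℝ := fun j => if j ∈ U then s j else T / n with hudef
  set t : Fin k → ℝ := fun j => if j ∈ U then 2 * T - 2 * n * s j else 0 with htdef
  have ht0 : ∀ j, 0 ≤ t j := by
    intro j
    simp only [htdef]
    split
    · next hj => linarith [hin j hj]
    · exact le_refl 0
  have hu_s : ∀ j, u j ≤ s j := by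
    intro j
    simp only [hudef]
    split
    · exact le_refl _
    · next hj => rw [div_le_iff₀ hn]; linarith [hout j hj, mul_comm n (s j)]
  have hu0 : ∀ j, 0 ≤ u j := by
    intro j
    simp only [hudef]
    split
    · exact hs0 j
    · positivity
  have hu_a : ∀ j, u j ≤ a j := fun j => (hu_s j).trans (min_le_left _ _)
  have hu_c : ∀ j, u j ≤ c j := fun j => (hu_s j).trans (min_le_right _ _)
  have htsum : ∑ j, t j = T := by
    have h1 : ∑ j, t j = ∑ j ∈ U, (2 * T - 2 * n * s j) := by
      rw [htdef]
      rw [Finset.sum_ite_mem, Finset.univ_inter]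
    rw [h1, Finset.sum_sub_distrib, Finset.sum_const, ← Finset.mul_sum]
    have : (U.card : ℝ) * (2 * T) - 2 * n * σ = T := by
      have : 2 * n * σ = T * D := hTD.symm
      rw [this, hDdef]; ring
    simpa [nsmul_eq_mul, hσdef] using this
  have hu_key : ∀ m, 2 * T - t m = 2 * n * u m := by
    intro m
    simp only [htdef, hudef]
    split
    · ring
    · field_simp
      ring
  have husum : ∑ j, u j = σ + ((k : ℝ) - U.card) * (T / n) := by
    rw [← Finset.sum_add_sum_compl U u]
    have h1 : ∑ j ∈ U, u j = σ := by
      apply Finset.sum_congr rfl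
      intro j hj
      simp [hudef, hj]
    have h2 : ∑ j ∈ Uᶜ, u j = ((k:ℝ) - U.card) * (T / n) := by
      have : ∀ j ∈ Uᶜ, u j = T / n := by
        intro j hj
        simp only [Finset.mem_compl] at hj
        simp [hudef, hj]
      rw [Finset.sum_congr rfl this, Finset.sum_const, Finset.card_compl]
      simp only [Fintype.card_fin, nsmul_eq_mul]
      congr 1
      push_cast [hrk]
      ring
    rw [h1, h2]
  -- the kept vertices and the weights
  set gA : Fin k → V k := fun j => if j ∈ U ∧ a j ≤ c j then vB k j else vA k j with hgA
  set gC : Fin k → V k := fun j => if j ∈ U ∧ ¬ a j ≤ c j then vB k j else vC k j with hgC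
  set g : (Fin k ⊕ Fin k) → V k := Sum.elim gA gC with hg
  set wA : Fin k → ℝ := fun j => if j ∈ U ∧ a j ≤ c j then t j else a j - u j with hwA
  set wC : Fin k → ℝ := fun j => if j ∈ U ∧ ¬ a j ≤ c j then t j else c j - u j with hwC
  set w : (Fin k ⊕ Fin k) → ℝ := Sum.elim wA wC with hw
  set S : Set (V k) := Set.range g with hS
  have hw0 : ∀ x, 0 ≤ w x := by
    rintro (j | j) <;> simp only [hw, Sum.elim_inl, Sum.elim_inr, hwA, hwC] <;> split
    · exact ht0 j
    · linarith [hu_a j]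
    · exact ht0 j
    · linarith [hu_c j]
  -- sum of weights is 1
  have hTkey : T = 2 * σ + 2 * ((k:ℝ) - U.card) * (T / n) := by
    have hTn : T * n = (2 * σ + 2 * ((k:ℝ) - U.card) * (T / n)) * n := by
      field_simp
      nlinarith [hTD]
    exact mul_right_cancel₀ hn.ne' hTn
  have hwkey : ∀ j, wA j + wC j = a j + c j - 2 * u j + t j := by
    intro j
    by_cases h1 : j ∈ U
    · by_cases h2 : a j ≤ c j
      · have hu : u j = a j := by simp [hudef, h1, hsdef, min_eq_left h2]
        simp only [hwA, hwC, if_pos (show j ∈ U ∧ a j ≤ c j from ⟨h1, h2⟩), if_neg (fun h : j ∈ U ∧ ¬ a j ≤ c j => h.2 h2)]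
        rw [hu]; ring
      · have hu : u j = c j := by
          simp [hudef, h1, hsdef, min_eq_right (le_of_not_ge h2)]
        simp only [hwA, hwC, if_neg (fun h : j ∈ U ∧ a j ≤ c j => h2 h.2), if_pos (show j ∈ U ∧ ¬ a j ≤ c j from ⟨h1, h2⟩)]
        rw [hu]; ring
    · have htj : t j = 0 := by simp [htdef, h1]
      simp only [hwA, hwC, if_neg (fun h : j ∈ U ∧ a j ≤ c j => h1 h.1), if_neg (fun h : j ∈ U ∧ ¬ a j ≤ c j => h1 h.1), htj]
      ring
  have hwsum : ∑ x, w x = 1 := by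
    rw [Fintype.sum_sum_type]
    simp only [hw, Sum.elim_inl, Sum.elim_inr]
    rw [← Finset.sum_add_distrib]
    rw [Finset.sum_congr rfl (fun j _ => hwkey j)]
    have hexp : ∑ j, (a j + c j - 2 * u j + t j)
        = (∑ j, a j + ∑ j, c j) - 2 * ∑ j, u j + ∑ j, t j := by
      rw [Finset.sum_add_distrib, Finset.sum_sub_distrib, Finset.sum_add_distrib,
        Finset.mul_sum]
    rw [hexp, htsum, husum]
    have hac : ∑ j, a j + ∑ j, c j = 1 := by
      rw [← hp1, Fintype.sum_sum_type]
    rw [hac]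
    linarith [hTkey]
  -- the convex combination equals p
  have hcomb : ∑ x, w x • g x = p := by
    funext x
    have hsummand : ∀ (y : Fin k ⊕ Fin k), ∀ j : Fin k,
        wA j * gA j y + wC j * gC j y
          = (a j - u j) * vA k j y + t j * vB k j y + (c j - u j) * vC k j y := by
      intro y j
      by_cases h1 : j ∈ U
      · by_cases h2 : a j ≤ c j
        · have hu : u j = a j := by simp [hudef, h1, hsdef, min_eq_left h2]
          simp only [hwA, hwC, hgA, hgC, if_pos (show j ∈ U ∧ a j ≤ c j from ⟨h1, h2⟩), if_neg (fun h : j ∈ U ∧ ¬ a j ≤ c j => h.2 h2)]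
          rw [hu]; ring
        · have hu : u j = c j := by
            simp [hudef, h1, hsdef, min_eq_right (le_of_not_ge h2)]
          simp only [hwA, hwC, hgA, hgC, if_neg (fun h : j ∈ U ∧ a j ≤ c j => h2 h.2), if_pos (show j ∈ U ∧ ¬ a j ≤ c j from ⟨h1, h2⟩)]
          rw [hu]; ring
      · have htj : t j = 0 := by simp [htdef, h1]
        simp only [hwA, hwC, hgA, hgC, if_neg (fun h : j ∈ U ∧ a j ≤ c j => h1 h.1), if_neg (fun h : j ∈ U ∧ ¬ a j ≤ c j => h1 h.1), htj]
        ring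
    have hsum_apply : (∑ y, w y • g y) x = ∑ y, w y * g y x := by
      rw [Finset.sum_apply]
      exact Finset.sum_congr rfl fun y _ => rfl
    rw [hsum_apply, Fintype.sum_sum_type]
    simp only [hw, hg, Sum.elim_inl, Sum.elim_inr]
    rw [← Finset.sum_add_distrib,
      Finset.sum_congr rfl (fun j _ => hsummand x j)]
    have hBsum : ∑ j, t j * vB k j x = u (x.elim id id) := by
      have hBval : ∀ j, vB k j x
          = (2 - if x.elim id id = j then 1 else 0) / (2 * n) := by
        intro j
        cases x <;> simp [vB, hndef] <;> rfl
      rw [Finset.sum_congr rfl (fun j _ => by rw [hBval j])]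
      have : ∑ j, t j * ((2 - if x.elim id id = j then 1 else 0) / (2 * n))
          = (∑ j, (t j * 2 - if x.elim id id = j then t j * 1 else t j * 0)) / (2 * n) := by
        rw [Finset.sum_div]
        apply Finset.sum_congr rfl
        intro j _
        rw [← mul_div_assoc]
        congr 1
        rw [mul_sub, mul_ite]
      rw [this, Finset.sum_sub_distrib]
      simp only [mul_one, mul_zero, Finset.sum_ite_eq, Finset.mem_univ, if_pos]
      rw [← Finset.sum_mul, htsum]
      have := hu_key (x.elim id id)
      have h2n : (0:ℝ) < 2 * n := by linarith
      field_simp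
      linarith [this]
    cases x with
    | inl m =>
      have hAsum : ∑ j, (a j - u j) * vA k j (Sum.inl m) = a m - u m := by
        have : ∀ j, (a j - u j) * vA k j (Sum.inl m)
            = if m = j then a j - u j else 0 := by
          intro j; simp [vA, mul_ite]
        rw [Finset.sum_congr rfl fun j _ => this j]
        simp
      have hCsum : ∑ j, (c j - u j) * vC k j (Sum.inl m) = 0 := by
        apply Finset.sum_eq_zero
        intro j _
        simp [vC]
      rw [Finset.sum_congr rfl (fun j _ => rfl)]
      calc ∑ j, ((a j - u j) * vA k j (Sum.inl m) + t j * vB k j (Sum.inl m)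
              + (c j - u j) * vC k j (Sum.inl m))
          = (∑ j, (a j - u j) * vA k j (Sum.inl m)) + (∑ j, t j * vB k j (Sum.inl m))
              + ∑ j, (c j - u j) * vC k j (Sum.inl m) := by
            rw [Finset.sum_add_distrib, Finset.sum_add_distrib]
        _ = p (Sum.inl m) := by
            rw [hAsum, hCsum, hBsum]
            simp only [Sum.elim_inl, id]
            show a m - u m + u m + 0 = p (Sum.inl m)
            simp [ha]
    | inr m =>
      have hAsum : ∑ j, (a j - u j) * vA k j (Sum.inr m) = 0 := by
        apply Finset.sum_eq_zero
        intro j _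
        simp [vA]
      have hCsum : ∑ j, (c j - u j) * vC k j (Sum.inr m) = c m - u m := by
        have : ∀ j, (c j - u j) * vC k j (Sum.inr m)
            = if m = j then c j - u j else 0 := by
          intro j; simp [vC, mul_ite]
        rw [Finset.sum_congr rfl fun j _ => this j]
        simp
      calc ∑ j, ((a j - u j) * vA k j (Sum.inr m) + t j * vB k j (Sum.inr m)
              + (c j - u j) * vC k j (Sum.inr m))
          = (∑ j, (a j - u j) * vA k j (Sum.inr m)) + (∑ j, t j * vB k j (Sum.inr m))
              + ∑ j, (c j - u j) * vC k j (Sum.inr m) := by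
            rw [Finset.sum_add_distrib, Finset.sum_add_distrib]
        _ = p (Sum.inr m) := by
            rw [hAsum, hCsum, hBsum]
            show 0 + u m + (c m - u m) = p (Sum.inr m)
            simp [hc]
    -- injectivity of g
  have hginj : Function.Injective g := by
    rintro (j | j') (j' | j'') hxy
    · simp only [hg, Sum.elim_inl, hgA] at hxy
      split_ifs at hxy with h1 h2 h2
      · exact congrArg Sum.inl (vB_inj hk hxy)
      · exact absurd hxy.symm (vA_ne_vB hk _ _)
      · exact absurd hxy (vA_ne_vB hk _ _)
      · exact congrArg Sum.inl (vA_inj hxy)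
    · simp only [hg, Sum.elim_inl, Sum.elim_inr, hgA, hgC] at hxy
      split_ifs at hxy with h1 h2 h2
      · have hjj := vB_inj hk hxy
        subst hjj
        exact absurd h1.2 h2.2
      · exact absurd hxy.symm (vC_ne_vB hk _ _)
      · exact absurd hxy (vA_ne_vB hk _ _)
      · exact absurd hxy (vA_ne_vC _ _)
    · simp only [hg, Sum.elim_inl, Sum.elim_inr, hgA, hgC] at hxy
      split_ifs at hxy with h1 h2 h2
      · have hjj := vB_inj hk hxy
        subst hjj
        exact absurd h2.2 h1.2
      · exact absurd hxy.symm (vA_ne_vB hk _ _)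
      · exact absurd hxy (vC_ne_vB hk _ _)
      · exact absurd hxy.symm (vA_ne_vC _ _)
    · simp only [hg, Sum.elim_inr, hgC] at hxy
      split_ifs at hxy with h1 h2 h2
      · exact congrArg Sum.inr (vB_inj hk hxy)
      · exact absurd hxy.symm (vC_ne_vB hk _ _)
      · exact absurd hxy (vC_ne_vB hk _ _)
      · exact congrArg Sum.inr (vC_inj hxy)
  have hcard : S.ncard = 2 * k := by
    rw [hS, ← Set.image_univ, Set.ncard_image_of_injective _ hginj, Set.ncard_univ]
    simp only [Nat.card_eq_fintype_card, Fintype.card_sum, Fintype.card_fin]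
    omega
  have hsubX : S ⊆ setX k := by
    rintro v ⟨x, rfl⟩
    rcases x with j | j <;>
      simp only [hg, Sum.elim_inl, Sum.elim_inr, hgA, hgC] <;> split
    · exact Set.mem_union_left _ (Set.mem_union_right _ ⟨j, rfl⟩)
    · exact Set.mem_union_left _ (Set.mem_union_left _ ⟨j, rfl⟩)
    · exact Set.mem_union_left _ (Set.mem_union_right _ ⟨j, rfl⟩)
    · exact Set.mem_union_right _ ⟨j, rfl⟩
  have hnotriple : ∀ j : Fin k, ¬ (({vA k j, vB k j, vC k j} : Set (V k)) ⊆ S) := by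
    intro j hsub
    by_cases h1 : j ∈ U
    · by_cases h2 : a j ≤ c j
      · have hmem : vA k j ∈ S := hsub (by simp)
        obtain ⟨x, hx⟩ := hmem
        rcases x with j' | j' <;>
          simp only [hg, Sum.elim_inl, Sum.elim_inr, hgA, hgC] at hx
        · split_ifs at hx with hcond
          · exact vA_ne_vB hk j j' hx.symm
          · exact hcond (by rw [vA_inj hx]; exact ⟨h1, h2⟩)
        · split_ifs at hx with hcond
          · exact vA_ne_vB hk j j' hx.symm
          · exact vA_ne_vC j j' hx.symm
      · have hmem : vC k j ∈ S := hsub (by simp)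
        obtain ⟨x, hx⟩ := hmem
        rcases x with j' | j' <;>
          simp only [hg, Sum.elim_inl, Sum.elim_inr, hgA, hgC] at hx
        · split_ifs at hx with hcond
          · exact vC_ne_vB hk j j' hx.symm
          · exact vA_ne_vC j' j hx
        · split_ifs at hx with hcond
          · exact vC_ne_vB hk j j' hx.symm
          · exact hcond (by rw [vC_inj hx]; exact ⟨h1, h2⟩)
    · have hmem : vB k j ∈ S := hsub (by simp)
      obtain ⟨x, hx⟩ := hmem
      rcases x with j' | j' <;>
        simp only [hg, Sum.elim_inl, Sum.elim_inr, hgA, hgC] at hx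
      · split_ifs at hx with hcond
        · exact h1 ((vB_inj hk hx) ▸ hcond.1)
        · exact vA_ne_vB hk j' j hx
      · split_ifs at hx with hcond
        · exact h1 ((vB_inj hk hx) ▸ hcond.1)
        · exact vC_ne_vB hk j' j hx
  have hneq : S ≠ setA k ∪ setC k := by
    obtain ⟨j₀, hj₀⟩ := hUne
    have hBmem : vB k j₀ ∈ S := by
      by_cases h2 : a j₀ ≤ c j₀
      · exact ⟨Sum.inl j₀, by
          simp only [hg, Sum.elim_inl, hgA]
          rw [if_pos (show j₀ ∈ U ∧ a j₀ ≤ c j₀ from ⟨hj₀, h2⟩)]⟩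
      · exact ⟨Sum.inr j₀, by
          simp only [hg, Sum.elim_inr, hgC]
          rw [if_pos (show j₀ ∈ U ∧ ¬ a j₀ ≤ c j₀ from ⟨hj₀, h2⟩)]⟩
    intro heq
    rw [heq] at hBmem
    rcases hBmem with ⟨i, hi⟩ | ⟨i, hi⟩
    · exact vA_ne_vB hk i j₀ hi
    · exact vC_ne_vB hk i j₀ hi
  have hpmem : p ∈ convexHull ℝ S := by
    have hmem := Finset.centerMass_mem_convexHull (s := S) Finset.univ
      (fun i _ => hw0 i) (by rw [hwsum]; norm_num) (fun i _ => Set.mem_range_self i)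
    rwa [Finset.centerMass_eq_of_sum_1 _ _ hwsum, hcomb] at hmem
  exact ⟨S, ⟨hsubX, hcard, hnotriple, hneq⟩, hpmem⟩

lemma setX_sub_std (hk : 2 ≤ k) : setX k ⊆ stdSimplex ℝ (Fin k ⊕ Fin k) := by
  rintro v ((⟨j, rfl⟩ | ⟨j, rfl⟩) | ⟨j, rfl⟩)
  · constructor
    · rintro (i | i)
      · simp only [vA]; split <;> norm_num
      · simp only [vA]; norm_num
    · rw [Fintype.sum_sum_type]
      simp [vA, Finset.sum_ite_eq']
  · constructor
    · rintro (i | i) <;> simp only [vB] <;>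
        exact div_nonneg (by split <;> norm_num) (by linarith [hNpos hk])
    · rw [Fintype.sum_sum_type]
      have hhalf : ∀ f : Fin k → (Fin k ⊕ Fin k),
          (∀ i, vB k j (f i) = (2 - if i = j then 1 else 0) / (2 * (2 * (k:ℝ) - 1))) →
          ∑ i : Fin k, vB k j (f i)
            = (2 * (k:ℝ) - 1) / (2 * (2 * (k:ℝ) - 1)) := by
        intro f hf
        rw [Finset.sum_congr rfl fun i _ => hf i, ← Finset.sum_div]
        congr 1
        rw [Finset.sum_sub_distrib]
        simp only [Finset.sum_const, Finset.card_univ, Fintype.card_fin,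
          Finset.sum_ite_eq', Finset.mem_univ, if_pos, nsmul_eq_mul, mul_one]
        ring
      rw [hhalf (fun i => Sum.inl i) (fun i => by simp [vB]),
        hhalf (fun i => Sum.inr i) (fun i => by simp [vB])]
      rw [← add_div, div_eq_one_iff_eq (by linarith [hNpos hk] : (2 * (2 * (k:ℝ) - 1)) ≠ 0)]
      ring
  · constructor
    · rintro (i | i)
      · simp only [vC]; norm_num
      · simp only [vC]; split <;> norm_num
    · rw [Fintype.sum_sum_type]
      simp [vC, Finset.sum_ite_eq']

lemma setAC_eq : setA k ∪ setC k =
    Set.range (fun i : Fin k ⊕ Fin k => fun j => if i = j then (1:ℝ) else 0) := by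
  ext v
  constructor
  · rintro (⟨j, rfl⟩ | ⟨j, rfl⟩)
    · exact ⟨Sum.inl j, by funext x; cases x <;> simp [vA, eq_comm, Sum.inl.injEq]⟩
    · exact ⟨Sum.inr j, by funext x; cases x <;> simp [vC, eq_comm, Sum.inr.injEq]⟩
  · rintro ⟨i, rfl⟩
    cases i with
    | inl j => exact Or.inl ⟨j, by funext x; cases x <;> simp [vA, eq_comm, Sum.inl.injEq]⟩
    | inr j => exact Or.inr ⟨j, by funext x; cases x <;> simp [vC, eq_comm, Sum.inr.injEq]⟩

lemma delta0_eq : Delta0 k = stdSimplex ℝ (Fin k ⊕ Fin k) := by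
  rw [Delta0, setAC_eq, ← convexHull_basis_eq_stdSimplex (R := ℝ) (Fin k ⊕ Fin k)]

/-- `Δ₀` is the union of the good simplices. -/
theorem stmt_9 (k : ℕ) (hk : 2 ≤ k) :
    Delta0 k = ⋃ S ∈ {S : Set (V k) | IsGood k S}, convexHull ℝ S := by
  apply Set.Subset.antisymm
  · intro p hp
    rw [delta0_eq] at hp
    obtain ⟨S, hSg, hpS⟩ := mem_good_union hk hp.1 hp.2
    exact Set.mem_biUnion hSg hpS
  · refine Set.iUnion₂_subset ?_
    intro S hS
    have h1 : S ⊆ stdSimplex ℝ (Fin k ⊕ Fin k) := fun v hv => setX_sub_std hk (hS.1 hv)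
    rw [delta0_eq]
    exact convexHull_min h1 (convex_stdSimplex ℝ _)
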